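/- For every k-history s, S_n(s) is a structured n,k-history. -/

import Mathlib

/-- A list over `A × Fin k` is *basic* (for parameter `n`) if it has length at most `n`
and all its pebble indices (second components) are distinct. -/
def basic {A : Type} {k : ℕ} (n : ℕ) (l : List (A × Fin k)) : Prop :=
  l.length ≤ n ∧ (l.map Prod.snd).Nodup

instance {A : Type} {k : ℕ} (n : ℕ) (l : List (A × Fin k)) : Decidable (basic n l) := by
  unfold basic; infer_instance

/-- The length of the largest basic prefix of `s`. -/
def lbp {A : Type} {k : ℕ} (n : ℕ) (s : List (A × Fin k)) : ℕ :=
  ((List.range (s.length + 1)).filter (fun m => decide (basic n (s.take m)))).foldr max 0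

/-- The `n`-structure function `S_n`: decompose a `k`-history into its largest basic
prefix followed by the structuring of the rest. -/
def Sn {A : Type} {k : ℕ} (n : ℕ) (s : List (A × Fin k)) : List (List (A × Fin k)) :=
  if h : s.length = 0 then []
  else if basic n s then [s]
  else s.take (max 1 (lbp n s)) :: Sn n (s.drop (max 1 (lbp n s)))
termination_by s.length
decreasing_by
  have h1 : 0 < s.length := Nat.pos_of_ne_zero h
  have h2 : 0 < max 1 (lbp n s) := lt_of_lt_of_le one_pos (le_max_left _ _)
  simp only [List.length_drop]
  omega

/-- An `n,k`-history (a list of blocks) is *structured* if for each pair of successive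
blocks `s, s'`, either `s` has length exactly `n` or `s'` begins with a pair whose
pebble index occurs in `s`. -/
def structured {A : Type} {k : ℕ} (n : ℕ) (t : List (List (A × Fin k))) : Prop :=
  t.Chain' (fun s s' => s.length = n ∨ ∃ a p, s'.head? = some (a, p) ∧ p ∈ s.map Prod.snd)

/-- for every `k`-history `s`, `S_n s` is a structured `n,k`-history,
i.e. all its blocks are nonempty basic lists and the structuredness condition holds. -/
lemma le_foldr_max {l : List ℕ} {a : ℕ} (h : a ∈ l) : a ≤ l.foldr max 0 := by
  induction l with
  | nil => simp at h
  | cons b t ih =>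
    rcases List.mem_cons.1 h with rfl | h
    · exact le_max_left _ _
    · exact le_trans (ih h) (le_max_right _ _)

lemma foldr_max_cases (l : List ℕ) : l.foldr max 0 = 0 ∨ l.foldr max 0 ∈ l := by
  induction l with
  | nil => left; rfl
  | cons b t ih =>
    simp only [List.foldr_cons]
    rcases Nat.le_total (t.foldr max 0) b with h | h
    · right; rw [max_eq_left h]; exact List.mem_cons_self
    · rw [max_eq_right h]
      rcases ih with h' | h'
      · left; exact h'
      · right; exact List.mem_cons_of_mem _ h'

lemma foldr_max_mem {l : List ℕ} (h0 : 0 ∈ l) : l.foldr max 0 ∈ l := by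
  rcases foldr_max_cases l with h | h
  · rw [h]; exact h0
  · exact h

lemma zero_mem_filter {A : Type} {k : ℕ} (n : ℕ) (s : List (A × Fin k)) :
    0 ∈ (List.range (s.length + 1)).filter (fun m => decide (basic n (s.take m))) := by
  simp [List.mem_filter, List.mem_range, basic]

lemma lbp_mem {A : Type} {k : ℕ} (n : ℕ) (s : List (A × Fin k)) :
    lbp n s ∈ (List.range (s.length + 1)).filter (fun m => decide (basic n (s.take m))) :=
  foldr_max_mem (zero_mem_filter n s)

lemma lbp_le_length {A : Type} {k : ℕ} (n : ℕ) (s : List (A × Fin k)) :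
    lbp n s ≤ s.length := by
  have := (List.mem_filter.1 (lbp_mem n s)).1
  simpa [Nat.lt_succ_iff] using List.mem_range.1 this

lemma basic_take_lbp {A : Type} {k : ℕ} (n : ℕ) (s : List (A × Fin k)) :
    basic n (s.take (lbp n s)) := by
  have := (List.mem_filter.1 (lbp_mem n s)).2
  simpa using this

lemma one_le_lbp {A : Type} {k : ℕ} {n : ℕ} (hn : 1 ≤ n) {s : List (A × Fin k)}
    (hs : s ≠ []) : 1 ≤ lbp n s := by
  apply le_foldr_max
  rw [List.mem_filter]
  constructor
  · rw [List.mem_range]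
    have : 1 ≤ s.length := List.length_pos_iff.2 hs
    omega
  · simp only [decide_eq_true_iff]
    refine ⟨le_trans (by rw [List.length_take]; omega) hn, ?_⟩
    match s with
    | x :: t => simp

lemma lbp_lt_length {A : Type} {k : ℕ} {n : ℕ} {s : List (A × Fin k)}
    (h : ¬ basic n s) : lbp n s < s.length := by
  rcases lt_or_eq_of_le (lbp_le_length n s) with h' | h'
  · exact h'
  · exfalso; apply h
    have := basic_take_lbp n s
    rwa [h', List.take_length] at this

lemma not_basic_take_succ {A : Type} {k : ℕ} {n : ℕ} {s : List (A × Fin k)}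
    (h : ¬ basic n s) : ¬ basic n (s.take (lbp n s + 1)) := by
  intro hb
  have : lbp n s + 1 ≤ lbp n s := by
    apply le_foldr_max
    rw [List.mem_filter, List.mem_range]
    refine ⟨by have := lbp_lt_length h; omega, by simpa using hb⟩
  omega

lemma Sn_head {A : Type} {k : ℕ} (n : ℕ) (t : List (A × Fin k)) (ht : t ≠ []) :
    ∃ b L, Sn n t = b :: L ∧ b.head? = t.head? := by
  rw [Sn]
  rw [dif_neg (by simpa using ht)]
  by_cases hb : basic n t
  · rw [if_pos hb]; exact ⟨t, [], rfl, rfl⟩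
  · rw [if_neg hb]
    refine ⟨_, _, rfl, ?_⟩
    match t, ht with
    | x :: t', _ =>
      match hm : max 1 (lbp n (x :: t')) with
      | 0 => omega
      | m + 1 => simp

theorem stmt_2 {A : Type} {n k : ℕ} (hn : 1 ≤ n) (hnk : n ≤ k)
    (s : List (A × Fin k)) :
    (∀ l ∈ Sn n s, l ≠ [] ∧ basic n l) ∧ structured n (Sn n s) := by
  induction s using Sn.induct n with
  | case1 s h => rw [Sn, dif_pos h]; simp [structured, List.Chain']
  | case2 s h hb =>
    rw [Sn, dif_neg h, if_pos hb]
    refine ⟨?_, by simp [structured, List.Chain']⟩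
    intro l hl
    simp only [List.mem_singleton] at hl
    subst hl
    exact ⟨by simpa using h, hb⟩
  | case3 s h hb ih =>
    rw [Sn, dif_neg h, if_neg hb]
    have hs : s ≠ [] := by simpa using h
    have h1 : 1 ≤ lbp n s := one_le_lbp hn hs
    have hmax : max 1 (lbp n s) = lbp n s := max_eq_right h1
    rw [hmax] at ih ⊢
    have hlt : lbp n s < s.length := lbp_lt_length hb
    have hdrop : s.drop (lbp n s) ≠ [] := by
      rw [← List.length_pos_iff, List.length_drop]; omega
    have hlen : (s.take (lbp n s)).length = lbp n s := by
      rw [List.length_take]; omega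
    obtain ⟨hb1, hb2⟩ := basic_take_lbp n s
    -- the key relation
    have hrel : (s.take (lbp n s)).length = n ∨
        ∃ a p, (s.drop (lbp n s)).head? = some (a, p) ∧
          p ∈ (s.take (lbp n s)).map Prod.snd := by
      by_cases hln : lbp n s = n
      · left; rw [hlen, hln]
      · right
        have hnb := not_basic_take_succ hb
        have htake : s.take (lbp n s + 1) = s.take (lbp n s) ++ [s.get ⟨lbp n s, hlt⟩] := by
          rw [List.take_succ]
          congr 1
          rw [List.getElem?_eq_getElem hlt]
          simp
        have hc : (s.get ⟨lbp n s, hlt⟩).snd ∈ (s.take (lbp n s)).map Prod.snd := by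
          by_contra hc
          apply hnb
          constructor
          · rw [htake, List.length_append, List.length_singleton, hlen]
            have : lbp n s ≤ n := hlen ▸ hb1
            omega
          · rw [htake, List.map_append]
            refine List.Nodup.append hb2 (by simp) ?_
            intro y hy hy'
            simp only [List.map_cons, List.map_nil, List.mem_singleton] at hy'
            subst hy'
            exact hc hy
        refine ⟨(s.get ⟨lbp n s, hlt⟩).fst, (s.get ⟨lbp n s, hlt⟩).snd, ?_, hc⟩
        rw [List.head?_drop, List.getElem?_eq_getElem hlt]
        simp
    obtain ⟨b', L', hSn, hhead⟩ := Sn_head n (s.drop (lbp n s)) hdrop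
    refine ⟨?_, ?_⟩
    · intro l hl
      rcases List.mem_cons.1 hl with rfl | hl
      · exact ⟨by rw [← List.length_pos_iff, hlen]; omega, ⟨hb1, hb2⟩⟩
      · exact ih.1 l hl
    · unfold structured List.Chain'; rw [List.isChain_cons]
      refine ⟨?_, ih.2⟩
      intro y hy
      rw [hSn] at hy
      simp only [List.head?_cons, Option.mem_def, Option.some.injEq] at hy
      subst hy
      rcases hrel with h' | ⟨a, p, hp, hp'⟩
      · left; exact h'
      · right; exact ⟨a, p, by rw [hhead]; exact hp, hp'⟩
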